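/- Abstract face-preserving rounding tradeoff theorem (existential version): Let Q ⊆ ℝ^N_{≥0} be a convex set contained in the nonnegative orthant, let R ⊆ ℝ^N be a convex set containing the origin, let c ∈ ℝ^N_{≥0}, and let 0 < λ ≤ 1. Let x ∈ Q, and suppose y* minimizes c · y over Q ∩ (x − λ·R). Suppose z satisfies z − y* ∈ R and there exists ε > 0 with y* + ε·(y* − z) ∈ Q. Then c · z ≤ (1/λ)·(c · x) and z ∈ x + (R − λ·R). -/

import Mathlib

open Pointwise

theorem stmt_10 {N : Type*} [Fintype N]
    (Q R : Set (N → ℝ)) (hQ : Convex ℝ Q)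
    (hQnonneg : ∀ q ∈ Q, ∀ i, 0 ≤ q i)
    (hR : Convex ℝ R) (h0 : (0 : N → ℝ) ∈ R)
    (c : N → ℝ) (hc : ∀ i, 0 ≤ c i)
    (l : ℝ) (hl0 : 0 < l) (hl1 : l ≤ 1)
    (x : N → ℝ) (hx : x ∈ Q)
    (ystar : N → ℝ) (hystar : ystar ∈ Q ∩ ({x} - l • R))
    (hmin : ∀ y ∈ Q ∩ ({x} - l • R), ∑ i, c i * ystar i ≤ ∑ i, c i * y i)
    (z : N → ℝ) (hzR : z - ystar ∈ R)
    (hface : ∃ ε > (0 : ℝ), ystar + ε • (ystar - z) ∈ Q) :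
    ∑ i, c i * z i ≤ (1 / l) * ∑ i, c i * x i ∧ z ∈ {x} + (R - l • R) := by
  obtain ⟨hyQ, hyx⟩ := hystar
  rw [Set.mem_sub] at hyx
  obtain ⟨x', hx', w, hw, hxw⟩ := hyx
  rw [Set.mem_singleton_iff] at hx'
  rw [hx'] at hxw
  obtain ⟨r, hr, hrw⟩ := hw
  have hy_eq : ∀ i, ystar i = x i - l * r i := by
    intro i
    have h1 := congrFun hxw i
    have h2 := congrFun hrw i
    simp only [Pi.sub_apply, Pi.smul_apply, smul_eq_mul] at h1 h2
    linarith
  obtain ⟨ε, hε, hfaceQ⟩ := hface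
  set ν : ℝ := ε / (2 * (ε + l)) with hν_def
  have hεl : 0 < ε + l := by linarith
  have hν_pos : 0 < ν := by positivity
  have hν_lt : ν < 1/2 := by
    rw [hν_def, div_lt_iff₀ (by linarith)]
    nlinarith
  set β : ℝ := l * ν / ε with hβ_def
  have hβ_pos : 0 < β := by positivity
  have hνβ : ν + β = 1/2 := by
    rw [hν_def, hβ_def, hν_def]
    field_simp
  have hβε : β * ε = l * ν := by
    rw [hβ_def]; field_simp
  -- the perturbed point
  set q : N → ℝ := (2*ν) • x + (2*β) • (ystar + ε • (ystar - z)) with hq_def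
  have hqQ : q ∈ Q :=
    hQ hx hfaceQ (by positivity) (by positivity) (by linarith)
  set y' : N → ℝ := (1/2 : ℝ) • ystar + (1/2 : ℝ) • q with hy'_def
  have hy'Q : y' ∈ Q := hQ hyQ hqQ (by norm_num) (by norm_num) (by norm_num)
  have h1 : (1:ℝ)/2 + β = 1 - ν := by linarith
  have hy'_eq : ∀ i, y' i = ystar i + ν * (x i - ystar i) + l * ν * (ystar i - z i) := by
    intro i
    simp only [hy'_def, hq_def, Pi.add_apply, Pi.smul_apply, Pi.sub_apply, smul_eq_mul]
    linear_combination (ystar i) * h1 + (ystar i - z i) * hβε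
  have hy'X : y' ∈ Q ∩ ({x} - l • R) := by
    refine ⟨hy'Q, ?_⟩
    rw [Set.mem_sub]
    refine ⟨x, Set.mem_singleton x, l • ((1-ν) • r + ν • (z - ystar)), ?_, ?_⟩
    · exact Set.smul_mem_smul_set (hR hr hzR (by linarith) (le_of_lt hν_pos) (by ring))
    · funext i
      simp only [Pi.sub_apply, Pi.add_apply, Pi.smul_apply, smul_eq_mul]
      have h3 := hy'_eq i
      have h4 := hy_eq i
      linear_combination -h3 - (1 - ν) * h4
  have hmin' := hmin y' hy'X
  have hsum_y' : ∑ i, c i * y' i = (∑ i, c i * ystar i)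
      + ν * ((∑ i, c i * x i) - ∑ i, c i * ystar i)
      + l * ν * ((∑ i, c i * ystar i) - ∑ i, c i * z i) := by
    have hterm : ∀ i, c i * y' i = c i * ystar i + ν * (c i * x i - c i * ystar i)
        + l * ν * (c i * ystar i - c i * z i) := by
      intro i; rw [hy'_eq i]; ring
    rw [Finset.sum_congr rfl (fun i _ => hterm i), Finset.sum_add_distrib,
      Finset.sum_add_distrib, ← Finset.mul_sum, ← Finset.mul_sum,
      Finset.sum_sub_distrib, Finset.sum_sub_distrib]
  set Sx := ∑ i, c i * x i
  set Ss := ∑ i, c i * ystar i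
  set Sz := ∑ i, c i * z i
  have h2 : 0 ≤ ν * (Sx - Ss + l * Ss - l * Sz) := by nlinarith [hmin', hsum_y']
  have hA : 0 ≤ Sx - Ss + l * Ss - l * Sz := by
    by_contra h
    push_neg at h
    nlinarith [mul_pos hν_pos (by linarith : (0:ℝ) < -(Sx - Ss + l * Ss - l * Sz))]
  have hystar_nonneg : 0 ≤ Ss :=
    Finset.sum_nonneg fun i _ => mul_nonneg (hc i) (hQnonneg ystar hyQ i)
  constructor
  · rw [div_mul_eq_mul_div, le_div_iff₀ hl0]
    nlinarith [mul_nonneg (by linarith : (0:ℝ) ≤ 1 - l) hystar_nonneg]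
  · rw [Set.mem_add]
    refine ⟨x, Set.mem_singleton x, (z - ystar) - l • r, ?_, ?_⟩
    · rw [Set.mem_sub]
      exact ⟨z - ystar, hzR, l • r, Set.smul_mem_smul_set hr, rfl⟩
    · funext i
      simp only [Pi.add_apply, Pi.sub_apply, Pi.smul_apply, smul_eq_mul]
      linear_combination -hy_eq i
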